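/- Let E be the elliptic curve y² = x³ − 10731x + 408170 over ℝ. The point P = (7, 126·√21) lies on E, [2]P = (70, 0), and P has order 4 in E(ℝ). -/

import Mathlib

open WeierstrassCurve WeierstrassCurve.Affine

/-- The elliptic curve `y² = x³ - 10731x + 408170` over `ℝ`. -/
def W6 : WeierstrassCurve.Affine ℝ := ⟨0, 0, 0, -10731, 408170⟩

lemma some_congr {W : WeierstrassCurve.Affine ℝ} {x₁ y₁ x₂ y₂ : ℝ}
    (h₁ : W.Nonsingular x₁ y₁) (h₂ : W.Nonsingular x₂ y₂) (hx : x₁ = x₂) (hy : y₁ = y₂) :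
    Point.some _ _ h₁ = Point.some _ _ h₂ := by subst hx; subst hy; rfl

lemma sqrt21_sq : Real.sqrt 21 ^ 2 = 21 := Real.sq_sqrt (by norm_num)

lemma sqrt21_pos : (0:ℝ) < Real.sqrt 21 := Real.sqrt_pos.mpr (by norm_num)

lemma hP6 : W6.Nonsingular 7 (126 * Real.sqrt 21) := by
  rw [nonsingular_iff, equation_iff]
  constructor
  · have := sqrt21_sq
    simp only [W6]
    nlinarith [sqrt21_sq]
  · right
    simp only [W6]
    nlinarith [sqrt21_sq, sqrt21_pos]

lemma hQ6 : W6.Nonsingular 70 0 := by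
  rw [nonsingular_iff, equation_iff]
  simp only [W6]
  norm_num

lemma negY_P : W6.negY 7 (126 * Real.sqrt 21) = -(126 * Real.sqrt 21) := by
  simp [negY, W6]

lemma Y_ne : (126 * Real.sqrt 21 : ℝ) ≠ W6.negY 7 (126 * Real.sqrt 21) := by
  rw [negY_P]
  nlinarith [sqrt21_pos]

lemma slope6 : W6.slope 7 7 (126 * Real.sqrt 21) (126 * Real.sqrt 21) = -42 / Real.sqrt 21 := by
  rw [slope_of_Y_ne rfl Y_ne, negY_P]
  simp only [W6]
  have h0 : Real.sqrt 21 ≠ 0 := ne_of_gt sqrt21_pos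
  field_simp
  ring

lemma addX6 : W6.addX 7 7 (W6.slope 7 7 (126 * Real.sqrt 21) (126 * Real.sqrt 21)) = 70 := by
  rw [slope6]
  have h0 : Real.sqrt 21 ≠ 0 := ne_of_gt sqrt21_pos
  simp only [addX, W6]
  field_simp
  nlinarith [sqrt21_sq]

lemma addY6 : W6.addY 7 7 (126 * Real.sqrt 21)
    (W6.slope 7 7 (126 * Real.sqrt 21) (126 * Real.sqrt 21)) = 0 := by
  rw [addY, negY, negAddY, addX6, slope6]
  have h0 : Real.sqrt 21 ≠ 0 := ne_of_gt sqrt21_pos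
  simp only [W6]
  field_simp
  nlinarith [sqrt21_sq]

lemma two_smul_P : 2 • Point.some _ _ hP6 = Point.some _ _ hQ6 := by
  rw [two_nsmul, Point.add_self_of_Y_ne Y_ne]
  exact some_congr _ _ addX6 addY6

lemma two_smul_Q : 2 • Point.some _ _ hQ6 = 0 := by
  rw [two_nsmul]
  exact Point.add_self_of_Y_eq (by simp [negY, W6])

/-- On `y² = x³ - 10731x + 408170` over `ℝ`: the point `P = (7, 126√21)` lies on the curve,
`[2]P = (70, 0)`, and `P` has order 4. -/
theorem quasi_critical_points_of_6T7 :
    W6.Δ ≠ 0 ∧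
    ∃ (hP : W6.Nonsingular 7 (126 * Real.sqrt 21)) (hQ : W6.Nonsingular 70 0),
      2 • Point.some _ _ hP = Point.some _ _ hQ ∧
      addOrderOf (Point.some _ _ hP) = 4 := by
  refine ⟨?_, hP6, hQ6, two_smul_P, ?_⟩
  · simp only [W6, WeierstrassCurve.Δ, b₂, b₄, b₆, b₈]
    norm_num
  · have h4 : (4 : ℕ) • Point.some _ _ hP6 = 0 := by
      have : (4 : ℕ) • Point.some _ _ hP6 = 2 • (2 • Point.some _ _ hP6) := by
        rw [← mul_nsmul]
      rw [this, two_smul_P, two_smul_Q]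
    have hdvd : addOrderOf (Point.some _ _ hP6) ∣ 4 :=
      addOrderOf_dvd_of_nsmul_eq_zero h4
    have hne0 : Point.some _ _ hP6 ≠ 0 := Point.some_ne_zero _
    have hne2 : ¬ (2 : ℕ) • Point.some _ _ hP6 = 0 := by
      rw [two_smul_P]
      exact Point.some_ne_zero _
    rcases (Nat.dvd_prime_pow Nat.prime_two).mp (show addOrderOf (Point.some _ _ hP6) ∣ 2^2 by norm_num; exact hdvd) with ⟨k, hk, hord⟩
    interval_cases k
    · exact absurd (AddMonoid.addOrderOf_eq_one_iff.mp (by simpa using hord)) hne0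
    · refine absurd ?_ hne2
      rw [← show addOrderOf (Point.some _ _ hP6) = 2 by simpa using hord]
      exact addOrderOf_nsmul_eq_zero _
    · simpa using hord
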